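/- Soundness of polarized subtyping for call-by-value: for call-by-value type names t, u and their Levy translations [t]_V, [u]_V into positive CBPV type names, (1) if [t]_V empty (CBPV emptiness) then t empty (CBV emptiness), and (2) if [t]_V ≤ [u]_V (CBPV positive subtyping) then t ≤ u (CBV subtyping). -/

import Mathlib

namespace CBPV

abbrev Label := String
abbrev Var := String

-- Positive types (values); `name` refers to an equirecursively defined type name.
mutual
inductive PosTp : Type where
  | name : String → PosTp
  | str  : PosStr → PosTp

/-- Structural positive types. -/
inductive PosStr : Type where
  | tensor : PosTp → PosTp → PosStr
  | one    : PosStr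
  | plus   : List (Label × PosTp) → PosStr
  | down   : NegTp → PosStr

/-- Negative types (computations). -/
inductive NegTp : Type where
  | name : String → NegTp
  | str  : NegStr → NegTp

/-- Structural negative types. -/
inductive NegStr : Type where
  | arrow   : PosTp → NegTp → NegStr
  | withRec : List (Label × NegTp) → NegStr
  | up      : PosTp → NegStr
end

mutual
/-- Values. -/
inductive Val : Type where
  | var   : Var → Val
  | pair  : Val → Val → Val
  | unit  : Val
  | inj   : Label → Val → Val
  | thunk : Comp → Val

/-- Computations. -/
inductive Comp : Type where
  | lam       : Var → Comp → Comp
  | app       : Comp → Val → Comp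
  | record    : List (Label × Comp) → Comp
  | proj      : Comp → Label → Comp
  | ret       : Val → Comp
  | letret    : Var → Comp → Comp → Comp
  | name      : String → Comp
  | matchPair : Val → Var → Var → Comp → Comp
  | matchUnit : Val → Comp → Comp
  | matchSum  : Val → List (Label × Var × Comp) → Comp
  | force     : Val → Comp
end

/-- A global signature: equirecursive (contractive) type definitions `t = τ⁺`,
`s = σ⁻`, and recursive expression definitions `f : σ⁻ = e`. -/
structure Signature : Type where
  pos  : String → PosStr
  neg  : String → NegStr
  defs : String → NegTp × Comp

mutual
/-- Substitution of value `w` for variable `x` in a value. -/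
def substV (w : Val) (x : Var) : Val → Val
  | .var y => if y = x then w else .var y
  | .pair v₁ v₂ => .pair (substV w x v₁) (substV w x v₂)
  | .unit => .unit
  | .inj j v => .inj j (substV w x v)
  | .thunk e => .thunk (substC w x e)

/-- Substitution of value `w` for variable `x` in a computation. -/
def substC (w : Val) (x : Var) : Comp → Comp
  | .lam y e => .lam y (if y = x then e else substC w x e)
  | .app e v => .app (substC w x e) (substV w x v)
  | .record L => .record (substRec w x L)
  | .proj e j => .proj (substC w x e) j
  | .ret v => .ret (substV w x v)
  | .letret y e₁ e₂ => .letret y (substC w x e₁) (if y = x then e₂ else substC w x e₂)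
  | .name f => .name f
  | .matchPair v y z e =>
      .matchPair (substV w x v) y z (if y = x ∨ z = x then e else substC w x e)
  | .matchUnit v e => .matchUnit (substV w x v) (substC w x e)
  | .matchSum v B => .matchSum (substV w x v) (substBr w x B)
  | .force v => .force (substV w x v)

def substRec (w : Val) (x : Var) : List (Label × Comp) → List (Label × Comp)
  | [] => []
  | (l, e) :: rest => (l, substC w x e) :: substRec w x rest

def substBr (w : Val) (x : Var) : List (Label × Var × Comp) → List (Label × Var × Comp)
  | [] => []
  | (l, y, e) :: rest =>
      (l, y, if y = x then e else substC w x e) :: substBr w x rest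
end

/-- Terminal computations. -/
inductive Terminal : Comp → Prop where
  | lam    : Terminal (.lam x e)
  | record : Terminal (.record L)
  | ret    : Terminal (.ret v)

/-- Small-step dynamics of call-by-push-value, relative to a signature. -/
inductive Step (Sg : Signature) : Comp → Comp → Prop where
  | beta       : Step Sg (.app (.lam x e) v) (substC v x e)
  | app        : Step Sg e e' → Step Sg (.app e v) (.app e' v)
  | letretBeta : Step Sg (.letret x (.ret v) e₂) (substC v x e₂)
  | letretStep : Step Sg e₁ e₁' → Step Sg (.letret x e₁ e₂) (.letret x e₁' e₂)
  | projBeta   : L.lookup j = some e → Step Sg (.proj (.record L) j) e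
  | projStep   : Step Sg e e' → Step Sg (.proj e j) (.proj e' j)
  | matchPair  : Step Sg (.matchPair (.pair v₁ v₂) x y e) (substC v₁ x (substC v₂ y e))
  | matchUnit  : Step Sg (.matchUnit .unit e) e
  | matchSum   : B.lookup j = some (x, ej) → Step Sg (.matchSum (.inj j v) B) (substC v x ej)
  | force      : Step Sg (.force (.thunk e)) e
  | name       : Sg.defs f = (σ, e) → Step Sg (.name f) e

end CBPV

namespace CBPV

def PosTp.IsName : PosTp → Prop := fun τ => ∃ t, τ = .name t
def NegTp.IsName : NegTp → Prop := fun σ => ∃ s, σ = .name s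

/-- A structural positive type is in normal form if all of its components are
type names, and its label lists have no duplicate labels. -/
def PosStrNormal : PosStr → Prop
  | .tensor τ₁ τ₂ => τ₁.IsName ∧ τ₂.IsName
  | .one => True
  | .plus L => (∀ p ∈ L, (Prod.snd p).IsName) ∧ (L.map Prod.fst).Nodup
  | .down σ => σ.IsName

def NegStrNormal : NegStr → Prop
  | .arrow τ σ => τ.IsName ∧ σ.IsName
  | .withRec L => (∀ p ∈ L, (Prod.snd p).IsName) ∧ (L.map Prod.fst).Nodup
  | .up τ => τ.IsName

/-- A signature is in normal form when every type definition alternates between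
type names and structural types, i.e. the components of every defined
structural type are themselves type names. -/
def SigNormal (Sg : Signature) : Prop :=
  (∀ t, PosStrNormal (Sg.pos t)) ∧ (∀ s, NegStrNormal (Sg.neg s))

/-- One unfolding of the rules for the emptiness judgment `t empty`. -/
def EmptyUnf (Sg : Signature) (S : String → Prop) (t : String) : Prop :=
  (∃ L, Sg.pos t = .plus L ∧
     ∀ p ∈ L, ∃ tj, Prod.snd p = PosTp.name tj ∧ S tj) ∨
  (∃ t₁ t₂, Sg.pos t = .tensor (.name t₁) (.name t₂) ∧ (S t₁ ∨ S t₂))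

/-- `t empty`: the greatest fixed point (circular derivations) of the
emptiness rules. -/
def TpEmpty (Sg : Signature) (t : String) : Prop :=
  ∃ S : String → Prop, (∀ u, S u → EmptyUnf Sg S u) ∧ S t

/-- `s full`: `s = t₁ → s₂ ∈ Σ` with `t₁ empty`, or `s = &{} ∈ Σ`. -/
def TpFull (Sg : Signature) (s : String) : Prop :=
  (∃ t₁ s₂, Sg.neg s = .arrow (.name t₁) (.name s₂) ∧ TpEmpty Sg t₁) ∨
  Sg.neg s = .withRec []

/-- One unfolding of the rules for positive subtyping `t ≤ u` between
positive type names. -/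
def PosSubUnf (Sg : Signature) (P N : String → String → Prop) (t u : String) : Prop :=
  (∃ t₁ t₂ u₁ u₂, Sg.pos t = .tensor (.name t₁) (.name t₂) ∧
     Sg.pos u = .tensor (.name u₁) (.name u₂) ∧ P t₁ u₁ ∧ P t₂ u₂) ∨
  (Sg.pos t = .one ∧ Sg.pos u = .one) ∨
  (∃ L K, Sg.pos t = .plus L ∧ Sg.pos u = .plus K ∧
     ∀ p ∈ L, ∃ tj, Prod.snd p = PosTp.name tj ∧
       (TpEmpty Sg tj ∨ ∃ uj, K.lookup (Prod.fst p) = some (PosTp.name uj) ∧ P tj uj)) ∨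
  (∃ s r, Sg.pos t = .down (.name s) ∧ Sg.pos u = .down (.name r) ∧ N s r) ∨
  TpEmpty Sg t

/-- One unfolding of the rules for negative subtyping `s ≤ r` between
negative type names. -/
def NegSubUnf (Sg : Signature) (P N : String → String → Prop) (s r : String) : Prop :=
  (∃ t₁ s₂ u₁ r₂, Sg.neg s = .arrow (.name t₁) (.name s₂) ∧
     Sg.neg r = .arrow (.name u₁) (.name r₂) ∧ P u₁ t₁ ∧ N s₂ r₂) ∨
  (∃ t u, Sg.neg s = .up (.name t) ∧ Sg.neg r = .up (.name u) ∧ P t u) ∨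
  (∃ L K, Sg.neg s = .withRec L ∧ Sg.neg r = .withRec K ∧
     ∀ p ∈ K, ∃ rj, Prod.snd p = NegTp.name rj ∧
       ∃ sj, L.lookup (Prod.fst p) = some (NegTp.name sj) ∧ N sj rj) ∨
  (∃ t, Sg.neg s = .up (.name t) ∧ TpEmpty Sg t) ∨
  TpFull Sg r

/-- `t ≤ u`: syntactic subtyping between positive type names, interpreted as
circular derivations (greatest fixed point of the subtyping rules). -/
def PosSub (Sg : Signature) (t u : String) : Prop :=
  ∃ P N : String → String → Prop,
    (∀ a b, P a b → PosSubUnf Sg P N a b) ∧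
    (∀ a b, N a b → NegSubUnf Sg P N a b) ∧ P t u

/-- `s ≤ r`: syntactic subtyping between negative type names, interpreted as
circular derivations (greatest fixed point of the subtyping rules). -/
def NegSub (Sg : Signature) (s r : String) : Prop :=
  ∃ P N : String → String → Prop,
    (∀ a b, P a b → PosSubUnf Sg P N a b) ∧
    (∀ a b, N a b → NegSubUnf Sg P N a b) ∧ N s r

end CBPV

namespace CBPV

/-- Structural source-language types (for call-by-name and call-by-value),
with type-name components: functions, eager pairs, unit, variant records and
lazy records. -/
inductive SrcTp : Type where
  | arrow   : String → String → SrcTp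
  | tensor  : String → String → SrcTp
  | one     : SrcTp
  | plus    : List (Label × String) → SrcTp
  | withRec : List (Label × String) → SrcTp

/-- A source-language signature of equirecursive type-name definitions. -/
structure SrcSig : Type where
  def_ : String → SrcTp

end CBPV

namespace CBPV

/-- One unfolding of the rules for call-by-value emptiness `t empty`. -/
def CBVEmptyUnf (S : SrcSig) (E : String → Prop) (t : String) : Prop :=
  (∃ t₁ t₂, S.def_ t = .tensor t₁ t₂ ∧ (E t₁ ∨ E t₂)) ∨
  (∃ L, S.def_ t = .plus L ∧ ∀ p ∈ L, E (Prod.snd p))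

/-- Call-by-value emptiness `t empty` (greatest fixed point of the rules). -/
def CBVEmpty (S : SrcSig) (t : String) : Prop :=
  ∃ E : String → Prop, (∀ a, E a → CBVEmptyUnf S E a) ∧ E t

/-- One unfolding of the rules for call-by-value subtyping `t ≤ u`. -/
def CBVUnf (S : SrcSig) (R : String → String → Prop) (t u : String) : Prop :=
  (∃ t₁ t₂ u₁ u₂, S.def_ t = .arrow t₁ t₂ ∧ S.def_ u = .arrow u₁ u₂ ∧
     R u₁ t₁ ∧ R t₂ u₂) ∨
  (∃ t₁ t₂ u₁ u₂, S.def_ t = .tensor t₁ t₂ ∧ S.def_ u = .tensor u₁ u₂ ∧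
     R t₁ u₁ ∧ R t₂ u₂) ∨
  (S.def_ t = .one ∧ S.def_ u = .one) ∨
  (∃ L J, S.def_ t = .plus L ∧ S.def_ u = .plus J ∧
     ∀ p ∈ L, (J.lookup (Prod.fst p) = none ∧ CBVEmpty S (Prod.snd p)) ∨
       (∃ uℓ, J.lookup (Prod.fst p) = some uℓ ∧ R (Prod.snd p) uℓ)) ∨
  (∃ L J, S.def_ t = .withRec L ∧ S.def_ u = .withRec J ∧
     ∀ p ∈ J, ∃ tj, L.lookup (Prod.fst p) = some tj ∧ R tj (Prod.snd p)) ∨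
  CBVEmpty S t ∨
  (∃ t₁ t₂ u₁ u₂, S.def_ t = .arrow t₁ t₂ ∧ S.def_ u = .arrow u₁ u₂ ∧
     CBVEmpty S u₁) ∨
  (∃ L u₁ u₂, S.def_ t = .withRec L ∧ S.def_ u = .arrow u₁ u₂ ∧
     CBVEmpty S u₁) ∨
  (∃ t₁ t₂, S.def_ t = .arrow t₁ t₂ ∧ S.def_ u = .withRec [])

/-- Call-by-value subtyping `t ≤ u`, interpreted as circular derivations
(greatest fixed point of the call-by-value subtyping rules). -/
def CBVSub (S : SrcSig) (t u : String) : Prop :=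
  ∃ R : String → String → Prop, (∀ a b, R a b → CBVUnf S R a b) ∧ R t u

/-- Levy's call-by-value translation of types, specified relationally:
`tr t` is the CBPV positive type name `[t]_V`, and the translated signature is
in normal form, with auxiliary type names inserted as needed:
`[τ→σ]_V = ↓([τ]_V → ↑[σ]_V)`, `[τ₁⊗τ₂]_V = [τ₁]_V ⊗ [τ₂]_V`, `[1]_V = 1`,
`[⊕{ℓ:τ_ℓ}]_V = ⊕{ℓ:[τ_ℓ]_V}`, and `[&{ℓ:σ_ℓ}]_V = ↓&{ℓ:↑[σ_ℓ]_V}`. -/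
def CBVTrans (S : SrcSig) (Sg : Signature) (tr : String → String) : Prop :=
  ∀ t : String,
    match S.def_ t with
    | .arrow t₁ t₂ => ∃ n m,
        Sg.pos (tr t) = .down (.name n) ∧
        Sg.neg n = .arrow (.name (tr t₁)) (.name m) ∧
        Sg.neg m = .up (.name (tr t₂))
    | .tensor t₁ t₂ =>
        Sg.pos (tr t) = .tensor (.name (tr t₁)) (.name (tr t₂))
    | .one => Sg.pos (tr t) = .one
    | .plus L =>
        Sg.pos (tr t) = .plus (L.map (fun p => (p.1, PosTp.name (tr p.2))))
    | .withRec L => ∃ (n : String) (M : Label × String → String),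
        Sg.pos (tr t) = .down (.name n) ∧
        Sg.neg n = .withRec (L.map (fun p => (p.1, NegTp.name (M p)))) ∧
        ∀ p ∈ L, Sg.neg (M p) = .up (.name (tr (Prod.snd p)))

end CBPV

namespace CBPV

lemma lookup_map_eq {β γ : Type} (L : List (String × β)) (f : String × β → γ)
    (k : String) (x : γ)
    (h : (L.map fun q => (q.1, f q)).lookup k = some x) :
    ∃ b, (k, b) ∈ L ∧ L.lookup k = some b ∧ x = f (k, b) := by
  induction L with
  | nil => simp [List.lookup] at h
  | cons q rest ih =>
    obtain ⟨a, b⟩ := q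
    by_cases hk : k = a
    · subst hk
      simp [List.lookup] at h
      exact ⟨b, by simp, by simp [List.lookup], h.symm⟩
    · have hb : (k == a) = false := by simpa using hk
      simp only [List.map_cons, List.lookup_cons, hb] at h ⊢
      obtain ⟨b', hmem, hlook, hx⟩ := ih h
      exact ⟨b', by simp [hmem], hlook, hx⟩

lemma TpEmpty_unfold {Sg : Signature} {a : String} (h : TpEmpty Sg a) :
    EmptyUnf Sg (TpEmpty Sg) a := by
  obtain ⟨Sp, hS, ha⟩ := h
  rcases hS a ha with ⟨L, hL, hall⟩ | ⟨t₁, t₂, heq, hor⟩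
  · exact Or.inl ⟨L, hL, fun p hp => by
      obtain ⟨tj, h1, h2⟩ := hall p hp; exact ⟨tj, h1, Sp, hS, h2⟩⟩
  · exact Or.inr ⟨t₁, t₂, heq, hor.imp (fun h => ⟨Sp, hS, h⟩) (fun h => ⟨Sp, hS, h⟩)⟩

section Trans
variable {S : SrcSig} {Sg : Signature} {tr : String → String}

lemma trans_arrow (htr : CBVTrans S Sg tr) {a a₁ a₂ : String}
    (hd : S.def_ a = .arrow a₁ a₂) :
    ∃ n m, Sg.pos (tr a) = .down (.name n) ∧
      Sg.neg n = .arrow (.name (tr a₁)) (.name m) ∧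
      Sg.neg m = .up (.name (tr a₂)) := by
  have h := htr a; rw [hd] at h; exact h

lemma trans_tensor (htr : CBVTrans S Sg tr) {a a₁ a₂ : String}
    (hd : S.def_ a = .tensor a₁ a₂) :
    Sg.pos (tr a) = .tensor (.name (tr a₁)) (.name (tr a₂)) := by
  have h := htr a; rw [hd] at h; exact h

lemma trans_one (htr : CBVTrans S Sg tr) {a : String}
    (hd : S.def_ a = .one) : Sg.pos (tr a) = .one := by
  have h := htr a; rw [hd] at h; exact h

lemma trans_plus (htr : CBVTrans S Sg tr) {a : String} {L : List (Label × String)}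
    (hd : S.def_ a = .plus L) :
    Sg.pos (tr a) = .plus (L.map (fun p => (p.1, PosTp.name (tr p.2)))) := by
  have h := htr a; rw [hd] at h; exact h

lemma trans_withRec (htr : CBVTrans S Sg tr) {a : String} {L : List (Label × String)}
    (hd : S.def_ a = .withRec L) :
    ∃ (n : String) (M : Label × String → String),
      Sg.pos (tr a) = .down (.name n) ∧
      Sg.neg n = .withRec (L.map (fun p => (p.1, NegTp.name (M p)))) ∧
      ∀ p ∈ L, Sg.neg (M p) = .up (.name (tr (Prod.snd p))) := by
  have h := htr a; rw [hd] at h; exact h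

lemma def_tensor (htr : CBVTrans S Sg tr) {a : String} {t₁ t₂ : PosTp}
    (h : Sg.pos (tr a) = .tensor t₁ t₂) :
    ∃ a₁ a₂, S.def_ a = .tensor a₁ a₂ ∧ t₁ = .name (tr a₁) ∧ t₂ = .name (tr a₂) := by
  rcases hd : S.def_ a with ⟨a₁,a₂⟩|⟨a₁,a₂⟩|_|L|L
  · obtain ⟨n,m,hp,-,-⟩ := trans_arrow htr hd; rw [hp] at h; cases h
  · rw [trans_tensor htr hd] at h
    injection h with h1 h2; exact ⟨a₁,a₂,rfl,h1.symm,h2.symm⟩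
  · rw [trans_one htr hd] at h; cases h
  · rw [trans_plus htr hd] at h; cases h
  · obtain ⟨n,M,hp,-,-⟩ := trans_withRec htr hd; rw [hp] at h; cases h

lemma def_one (htr : CBVTrans S Sg tr) {a : String}
    (h : Sg.pos (tr a) = .one) : S.def_ a = .one := by
  rcases hd : S.def_ a with ⟨a₁,a₂⟩|⟨a₁,a₂⟩|_|L|L
  · obtain ⟨n,m,hp,-,-⟩ := trans_arrow htr hd; rw [hp] at h; cases h
  · rw [trans_tensor htr hd] at h; cases h
  · rfl
  · rw [trans_plus htr hd] at h; cases h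
  · obtain ⟨n,M,hp,-,-⟩ := trans_withRec htr hd; rw [hp] at h; cases h

lemma def_plus (htr : CBVTrans S Sg tr) {a : String} {L' : List (Label × PosTp)}
    (h : Sg.pos (tr a) = .plus L') :
    ∃ L, S.def_ a = .plus L ∧ L' = L.map (fun p => (p.1, PosTp.name (tr p.2))) := by
  rcases hd : S.def_ a with ⟨a₁,a₂⟩|⟨a₁,a₂⟩|_|L|L
  · obtain ⟨n,m,hp,-,-⟩ := trans_arrow htr hd; rw [hp] at h; cases h
  · rw [trans_tensor htr hd] at h; cases h
  · rw [trans_one htr hd] at h; cases h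
  · rw [trans_plus htr hd] at h; injection h with h1; exact ⟨L, rfl, h1.symm⟩
  · obtain ⟨n,M,hp,-,-⟩ := trans_withRec htr hd; rw [hp] at h; cases h

lemma def_down (htr : CBVTrans S Sg tr) {a : String} {s : String}
    (h : Sg.pos (tr a) = .down (.name s)) :
    (∃ a₁ a₂ m, S.def_ a = .arrow a₁ a₂ ∧
       Sg.neg s = .arrow (.name (tr a₁)) (.name m) ∧
       Sg.neg m = .up (.name (tr a₂))) ∨
    (∃ (L : List (Label × String)) (M : Label × String → String), S.def_ a = .withRec L ∧
       Sg.neg s = .withRec (L.map (fun p => (p.1, NegTp.name (M p)))) ∧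
       ∀ p ∈ L, Sg.neg (M p) = .up (.name (tr (Prod.snd p)))) := by
  rcases hd : S.def_ a with ⟨a₁,a₂⟩|⟨a₁,a₂⟩|_|L|L
  · obtain ⟨n,m,hp,h1,h2⟩ := trans_arrow htr hd; rw [hp] at h
    injection h with h'; injection h' with h''
    exact Or.inl ⟨a₁,a₂,m, rfl, h'' ▸ h1, h2⟩
  · rw [trans_tensor htr hd] at h; cases h
  · rw [trans_one htr hd] at h; cases h
  · rw [trans_plus htr hd] at h; cases h
  · obtain ⟨n,M,hp,h1,h2⟩ := trans_withRec htr hd; rw [hp] at h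
    injection h with h'; injection h' with h''
    exact Or.inr ⟨L, M, rfl, h'' ▸ h1, h2⟩

lemma cbv_empty_sound (htr : CBVTrans S Sg tr) :
    ∀ t : String, TpEmpty Sg (tr t) → CBVEmpty S t := by
  intro t h
  refine ⟨fun a => TpEmpty Sg (tr a), ?_, h⟩
  intro a ha
  rcases TpEmpty_unfold ha with ⟨L', hL', hall⟩ | ⟨t₁, t₂, he, hor⟩
  · obtain ⟨L, hd, hmap⟩ := def_plus htr hL'
    refine Or.inr ⟨L, hd, fun p hp => ?_⟩
    have hmem : (p.1, PosTp.name (tr p.2)) ∈ L' := by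
      rw [hmap]; exact List.mem_map_of_mem hp
    obtain ⟨tj, h1, h2⟩ := hall _ hmem
    simp only at h1
    injection h1 with h1'
    show TpEmpty Sg (tr p.2)
    rw [h1']; exact h2
  · obtain ⟨a₁, a₂, hd, h1, h2⟩ := def_tensor htr he
    injection h1 with h1'; injection h2 with h2'
    exact Or.inl ⟨a₁, a₂, hd, hor.imp (fun hx => show TpEmpty Sg (tr a₁) by rw [← h1']; exact hx) (fun hx => show TpEmpty Sg (tr a₂) by rw [← h2']; exact hx)⟩
end Trans
/-- Soundness of polarized subtyping for call-by-value: for call-by-value type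
names `t`, `u` and their Levy translations `[t]_V`, `[u]_V` into positive
CBPV type names,
(1) if `[t]_V empty` (CBPV emptiness) then `t empty` (CBV emptiness), and
(2) if `[t]_V ≤ [u]_V` (CBPV positive subtyping) then `t ≤ u` (CBV subtyping). -/
theorem cbv_subtyping_sound (S : SrcSig) (Sg : Signature)
    (tr : String → String) (htr : CBVTrans S Sg tr) :
    (∀ t : String, TpEmpty Sg (tr t) → CBVEmpty S t) ∧
    (∀ t u : String, PosSub Sg (tr t) (tr u) → CBVSub S t u) := by
  refine ⟨cbv_empty_sound htr, ?_⟩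
  intro t u hsub
  obtain ⟨P, N, hP, hN, htu⟩ := hsub
  refine ⟨fun a b => P (tr a) (tr b) ∨ CBVEmpty S a, ?_, Or.inl htu⟩
  rintro a b (hab | hab)
  case inr => exact Or.inr (Or.inr (Or.inr (Or.inr (Or.inr (Or.inl hab)))))
  rcases hP _ _ hab with ⟨t₁,t₂,u₁,u₂,hpa,hpb,h1,h2⟩ | ⟨hpa,hpb⟩ |
    ⟨L',K',hpa,hpb,hall⟩ | ⟨s,r,hpa,hpb,hNsr⟩ | hempty
  -- tensor
  · obtain ⟨a₁,a₂,hda,he1,he2⟩ := def_tensor htr hpa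
    obtain ⟨b₁,b₂,hdb,hf1,hf2⟩ := def_tensor htr hpb
    injection he1 with he1; injection he2 with he2
    injection hf1 with hf1; injection hf2 with hf2
    subst he1; subst he2; subst hf1; subst hf2
    exact Or.inr (Or.inl ⟨a₁,a₂,b₁,b₂,hda,hdb,Or.inl h1,Or.inl h2⟩)
  -- one
  · exact Or.inr (Or.inr (Or.inl ⟨def_one htr hpa, def_one htr hpb⟩))
  -- plus
  · obtain ⟨L,hda,hmapL⟩ := def_plus htr hpa
    obtain ⟨K,hdb,hmapK⟩ := def_plus htr hpb
    refine Or.inr (Or.inr (Or.inr (Or.inl ⟨L,K,hda,hdb, fun p hp => ?_⟩)))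
    have hmem : (p.1, PosTp.name (tr p.2)) ∈ L' := by
      rw [hmapL]; exact List.mem_map_of_mem hp
    obtain ⟨tj,h1,h2⟩ := hall _ hmem
    simp only at h1
    injection h1 with h1; subst h1
    rcases h2 with h2 | ⟨uj, hlk, hPj⟩
    · cases hJ : K.lookup p.1 with
      | none => exact Or.inl ⟨rfl, cbv_empty_sound htr _ h2⟩
      | some uℓ => exact Or.inr ⟨uℓ, rfl, Or.inr (cbv_empty_sound htr _ h2)⟩
    · rw [hmapK] at hlk
      obtain ⟨b', hmem', hlook, hx⟩ := lookup_map_eq K _ _ _ hlk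
      injection hx with hx
      exact Or.inr ⟨b', hlook, Or.inl (hx ▸ hPj)⟩
  -- down
  · rcases def_down htr hpa with ⟨a₁,a₂,ma,hda,hsa,hma⟩ | ⟨La,Ma,hda,hsa,hMa⟩ <;>
      rcases def_down htr hpb with ⟨b₁,b₂,mb,hdb,hsb,hmb⟩ | ⟨Lb,Mb,hdb,hsb,hMb⟩
    -- arrow / arrow
    · rcases hN _ _ hNsr with ⟨t₁',s₂',u₁',r₂',ha',hb',hP1,hN2⟩ |
        ⟨t',u',h1,h2,hP'⟩ | ⟨L₀,K₀,hs0,hr0,hall'⟩ | ⟨t',h1,hE⟩ | hfull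
      · rw [hsa] at ha'; rw [hsb] at hb'
        injection ha' with e1 e2; injection e1 with e1; injection e2 with e2
        injection hb' with f1 f2; injection f1 with f1; injection f2 with f2
        subst e1; subst e2; subst f1; subst f2
        rcases hN _ _ hN2 with ⟨x₁,x₂,x₃,x₄,g1,g2,hP2',hN2'⟩ |
          ⟨x,y,g1,g2,hP2⟩ | ⟨L₀,K₀,g1,g2,hall'⟩ | ⟨x,g1,hE2⟩ | hfull2
        · rw [hma] at g1; cases g1
        · rw [hma] at g1; rw [hmb] at g2
          injection g1 with g1; injection g1 with g1
          injection g2 with g2; injection g2 with g2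
          subst g1; subst g2
          exact Or.inl ⟨a₁,a₂,b₁,b₂,hda,hdb,Or.inl hP1,Or.inl hP2⟩
        · rw [hma] at g1; cases g1
        · rw [hma] at g1
          injection g1 with g1; injection g1 with g1
          subst g1
          exact Or.inl ⟨a₁,a₂,b₁,b₂,hda,hdb,Or.inl hP1,
            Or.inr (cbv_empty_sound htr _ hE2)⟩
        · rcases hfull2 with ⟨x,y,g1,hE2⟩ | g1
          · rw [hmb] at g1; cases g1
          · rw [hmb] at g1; cases g1
      · rw [hsa] at h1; cases h1
      · rw [hsa] at hs0; cases hs0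
      · rw [hsa] at h1; cases h1
      · rcases hfull with ⟨u₁',r₂',g1,hE1⟩ | g1
        · rw [hsb] at g1
          injection g1 with e1 e2; injection e1 with e1
          subst e1
          exact Or.inr (Or.inr (Or.inr (Or.inr (Or.inr (Or.inr (Or.inl
            ⟨a₁,a₂,b₁,b₂,hda,hdb, cbv_empty_sound htr _ hE1⟩))))))
        · rw [hsb] at g1; cases g1
    -- arrow / withRec
    · rcases hN _ _ hNsr with ⟨t₁',s₂',u₁',r₂',ha',hb',hP1,hN2⟩ |
        ⟨t',u',h1,h2,hP'⟩ | ⟨L₀,K₀,hs0,hr0,hall'⟩ | ⟨t',h1,hE⟩ | hfull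
      · rw [hsb] at hb'; cases hb'
      · rw [hsa] at h1; cases h1
      · rw [hsa] at hs0; cases hs0
      · rw [hsa] at h1; cases h1
      · rcases hfull with ⟨x,y,g1,hE⟩ | g1
        · rw [hsb] at g1; cases g1
        · rw [hsb] at g1
          injection g1 with g1
          have hLb : Lb = [] := List.map_eq_nil_iff.mp g1
          exact Or.inr (Or.inr (Or.inr (Or.inr (Or.inr (Or.inr (Or.inr (Or.inr
            ⟨a₁,a₂,hda, hLb ▸ hdb⟩)))))))
    -- withRec / arrow
    · rcases hN _ _ hNsr with ⟨t₁',s₂',u₁',r₂',ha',hb',hP1,hN2⟩ |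
        ⟨t',u',h1,h2,hP'⟩ | ⟨L₀,K₀,hs0,hr0,hall'⟩ | ⟨t',h1,hE⟩ | hfull
      · rw [hsa] at ha'; cases ha'
      · rw [hsa] at h1; cases h1
      · rw [hsb] at hr0; cases hr0
      · rw [hsa] at h1; cases h1
      · rcases hfull with ⟨x,y,g1,hE⟩ | g1
        · rw [hsb] at g1
          injection g1 with e1 e2; injection e1 with e1
          subst e1
          exact Or.inr (Or.inr (Or.inr (Or.inr (Or.inr (Or.inr (Or.inr (Or.inl
            ⟨La,b₁,b₂,hda,hdb, cbv_empty_sound htr _ hE⟩)))))))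
        · rw [hsb] at g1; cases g1
    -- withRec / withRec
    · rcases hN _ _ hNsr with ⟨t₁',s₂',u₁',r₂',ha',hb',hP1,hN2⟩ |
        ⟨t',u',h1,h2,hP'⟩ | ⟨L₀,K₀,hs0,hr0,hall'⟩ | ⟨t',h1,hE⟩ | hfull
      · rw [hsa] at ha'; cases ha'
      · rw [hsa] at h1; cases h1
      · rw [hsa] at hs0; rw [hsb] at hr0
        injection hs0 with e; injection hr0 with f
        refine Or.inr (Or.inr (Or.inr (Or.inr (Or.inl
          ⟨La, Lb, hda, hdb, fun p hp => ?_⟩))))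
        have hmem : (p.1, NegTp.name (Mb p)) ∈ K₀ := by
          rw [← f]; exact List.mem_map_of_mem hp
        obtain ⟨rj, g1, sj, hlk, hNsr'⟩ := hall' _ hmem
        simp only at g1
        injection g1 with g1; subst g1
        rw [← e] at hlk
        obtain ⟨b', hmem', hlook, hx⟩ := lookup_map_eq La _ _ _ hlk
        injection hx with hx; subst hx
        have h_a := hMa _ hmem'
        have h_b := hMb _ hp
        rcases hN _ _ hNsr' with ⟨x₁,x₂,x₃,x₄,g1,g2,hP2',hN2'⟩ |
          ⟨x,y,g1,g2,hP2⟩ | ⟨L₁,K₁,g1,g2,hall''⟩ | ⟨x,g1,hE2⟩ | hfull2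
        · rw [h_a] at g1; cases g1
        · rw [h_a] at g1; rw [h_b] at g2
          injection g1 with g1; injection g1 with g1
          injection g2 with g2; injection g2 with g2
          subst g1; subst g2
          exact ⟨b', hlook, Or.inl hP2⟩
        · rw [h_a] at g1; cases g1
        · rw [h_a] at g1
          injection g1 with g1; injection g1 with g1
          subst g1
          exact ⟨b', hlook, Or.inr (cbv_empty_sound htr _ hE2)⟩
        · rcases hfull2 with ⟨x,y,g1,hE2⟩ | g1
          · rw [h_b] at g1; cases g1
          · rw [h_b] at g1; cases g1
      · rw [hsa] at h1; cases h1
      · rcases hfull with ⟨x,y,g1,hE⟩ | g1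
        · rw [hsb] at g1; cases g1
        · rw [hsb] at g1
          injection g1 with g1
          have hLb : Lb = [] := List.map_eq_nil_iff.mp g1
          exact Or.inr (Or.inr (Or.inr (Or.inr (Or.inl
            ⟨La, [], hda, hLb ▸ hdb, fun p hp => absurd hp List.not_mem_nil⟩))))
  -- empty
  · exact Or.inr (Or.inr (Or.inr (Or.inr (Or.inr (Or.inl
      (cbv_empty_sound htr _ hempty))))))

end CBPV
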